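/- Let R(u,v) = R(u,0)·R(0,v) with R(u,0) = R(0,u) and ∑_u |R(u,0)| < ∞. Let μ_r be the law of r(U) where r(x) = ∑_{k∈ℤ} R(k,0) e^{−ikx} and U is uniform on (−π,π), and μ_s the standard semicircle law on [−2,2]. Then for every m ≥ 1, the 2m-th moment of the free multiplicative convolution μ_r ⊠ μ_s equals β_{2m} := ∑_{σ∈NC₂(2m)} ∑_{k∈S(σ)} ∏_{(u,v)∈σ} R(k_u,0) R(k_v,0), using that ∫ x^j dμ_r = ∑_{k₁+…+k_j=0} ∏_i R(k_i,0) and the moment formula ∫ x^{2m} d(μ_r ⊠ μ_s) = ∑_{σ∈NC₂(2m)} ∏_{j=1}^{m+1} ∫ x^{l_j^σ} dμ_r, where l_j^σ are the Kreweras block sizes of σ. -/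

import Mathlib

/-- Cyclic predecessor on `Fin n`. -/
def cpred {n : ℕ} (j : Fin n) : Fin n :=
  ⟨(j.val + n - 1) % n, Nat.mod_lt _ (Nat.lt_of_le_of_lt (Nat.zero_le _) j.isLt)⟩

/-- A fixed-point-free involution of `Fin (2*m)` whose pairing is non-crossing. -/
def IsNCPairing (m : ℕ) (π : Equiv.Perm (Fin (2*m))) : Prop :=
  (∀ j, π (π j) = j) ∧ (∀ j, π j ≠ j) ∧
  ¬ ∃ a b c d : Fin (2*m), a < b ∧ b < c ∧ c < d ∧ π a = c ∧ π b = d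

/-- Position of the interlaced point `(i, b)`: the element `i` sits at `2i`,
its barred copy `ī` at `2i+1`. -/
def interPos (m : ℕ) (p : Fin (2*m) × Bool) : ℕ :=
  2 * p.1.val + (if p.2 then 1 else 0)

/-- The relation on the interlaced set `{1,1̄,…,2m,2m̄}` combining the pairing `π`
(on unbarred points) and the relation `E` (on barred points). -/
def CombinedRel (m : ℕ) (π : Equiv.Perm (Fin (2*m)))
    (E : Fin (2*m) → Fin (2*m) → Prop) (p q : Fin (2*m) × Bool) : Prop :=
  match p, q with
  | (i, false), (j, false) => i = j ∨ π i = j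
  | (i, true), (j, true) => E i j
  | _, _ => False

/-- Non-crossing property of the combined partition `σ ∪ σ̄` on the interlaced set. -/
def CombinedNC (m : ℕ) (π : Equiv.Perm (Fin (2*m)))
    (E : Fin (2*m) → Fin (2*m) → Prop) : Prop :=
  ∀ p q r s : Fin (2*m) × Bool,
    interPos m p < interPos m q → interPos m q < interPos m r →
    interPos m r < interPos m s →
    CombinedRel m π E p r → CombinedRel m π E q s → CombinedRel m π E p q

/-- `E` is (the equivalence relation of) the Kreweras complement of the
non-crossing pairing `π`: it is an equivalence relation on the barred copies such
that `σ ∪ σ̄` is non-crossing, and it is maximal among such relations. -/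
def IsKreweras (m : ℕ) (π : Equiv.Perm (Fin (2*m)))
    (E : Fin (2*m) → Fin (2*m) → Prop) : Prop :=
  Equivalence E ∧ CombinedNC m π E ∧
  ∀ E' : Fin (2*m) → Fin (2*m) → Prop, Equivalence E' → CombinedNC m π E' →
    ∀ i j, E' i j → E i j


open Finset

lemma summable_fin_abs_prod {f : ℤ → ℝ} (hf : Summable fun k : ℤ => |f k|) :
    ∀ n : ℕ, Summable fun k : Fin n → ℤ => ∏ i, |f (k i)| := by
  intro n
  induction n with
  | zero =>
      have : (fun k : Fin 0 → ℤ => ∏ i, |f (k i)|) = fun _ => 1 := by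
        funext k; simp
      rw [this]
      exact Summable.of_finite
  | succ n ihn =>
      have h2 : Summable fun p : ℤ × (Fin n → ℤ) => |f p.1| * ∏ i, |f (p.2 i)| := by
        apply Summable.mul_of_nonneg hf ihn
        · exact fun _ => abs_nonneg _
        · exact fun k => Finset.prod_nonneg fun i _ => abs_nonneg _
      rw [← (Fin.consEquiv (fun _ : Fin (n+1) => ℤ)).summable_iff]
      refine h2.congr fun p => ?_
      simp [Fin.consEquiv, Fin.prod_univ_succ]

lemma summable_pi_abs_prod {f : ℤ → ℝ} (hf : Summable fun k : ℤ => |f k|)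
    (γ : Type) [Fintype γ] : Summable fun k : γ → ℤ => ∏ i, |f (k i)| := by
  classical
  let e := Fintype.equivFin γ
  let E : (γ → ℤ) ≃ (Fin (Fintype.card γ) → ℤ) := Equiv.arrowCongr e (Equiv.refl ℤ)
  have h := (E.summable_iff (f := fun k : Fin (Fintype.card γ) → ℤ => ∏ i, |f (k i)|)).mpr
    (summable_fin_abs_prod hf _)
  refine h.congr fun k => ?_
  show ∏ j, |f (E k j)| = ∏ i, |f (k i)|
  have : ∀ j, E k j = k (e.symm j) := fun j => rfl
  simp only [this]
  exact Equiv.prod_comp e.symm fun i => |f (k i)|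

lemma summable_norm_prod_subtype {f : ℤ → ℝ} (hf : Summable fun k : ℤ => |f k|)
    (γ : Type) [Fintype γ] (P : (γ → ℤ) → Prop) :
    Summable fun k : {k : γ → ℤ // P k} => ‖∏ i, f (k.1 i)‖ := by
  have h := (summable_pi_abs_prod hf γ).subtype {k | P k}
  refine h.congr fun k => ?_
  simp [Real.norm_eq_abs, Finset.abs_prod]

lemma tsum_zero_sum_equiv (f : ℤ → ℝ) (γ : Type) [Fintype γ] (n : ℕ) (e : γ ≃ Fin n) :
    (∑' k : {k : γ → ℤ // ∑ i, k i = 0}, ∏ i, f (k.1 i))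
    = ∑' k : {k : Fin n → ℤ // ∑ i, k i = 0}, ∏ i, f (k.1 i) := by
  let Ψ : {k : Fin n → ℤ // ∑ i, k i = 0} ≃ {k : γ → ℤ // ∑ i, k i = 0} :=
    { toFun := fun k => ⟨fun i => k.1 (e i), by
        rw [show (∑ i, k.1 (e i)) = ∑ i, k.1 i from Equiv.sum_comp e k.1]; exact k.2⟩
      invFun := fun k => ⟨fun j => k.1 (e.symm j), by
        rw [show (∑ j, k.1 (e.symm j)) = ∑ i, k.1 i from Equiv.sum_comp e.symm k.1]; exact k.2⟩
      left_inv := fun k => Subtype.ext (funext fun j => by simp)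
      right_inv := fun k => Subtype.ext (funext fun i => by simp) }
  rw [← Ψ.tsum_eq]
  exact tsum_congr fun k => Equiv.prod_comp e fun j => f (k.1 j)

lemma pair_prod {N : ℕ} (π : Equiv.Perm (Fin N)) (hinv : ∀ j, π (π j) = j)
    (hfpf : ∀ j, π j ≠ j) (g : Fin N → ℝ) :
    ∏ j ∈ Finset.univ.filter (fun j => j < π j), (g j * g (π j)) = ∏ i, g i := by
  classical
  rw [Finset.prod_mul_distrib]
  have h2 : ∏ j ∈ Finset.univ.filter (fun j => j < π j), g (π j)
      = ∏ j ∈ Finset.univ.filter (fun j => ¬ j < π j), g j := by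
    refine Finset.prod_nbij' (fun j => π j) (fun j => π j) ?_ ?_ ?_ ?_ ?_
    · intro a ha
      simp only [mem_filter, mem_univ, true_and] at ha ⊢
      rw [hinv]
      exact not_lt_of_gt ha
    · intro a ha
      simp only [mem_filter, mem_univ, true_and] at ha ⊢
      rw [hinv]
      rcases (hfpf a).lt_or_gt with h | h
      · exact h
      · exact absurd h ha
    · intro a _; exact hinv a
    · intro a _; exact hinv a
    · intro a _; rfl
  rw [h2, Finset.prod_filter_mul_prod_filter_not]

lemma factor (f : ℤ → ℝ) (hf : Summable fun k : ℤ => |f k|) :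
    ∀ (n : ℕ) (α : Type) [Fintype α] [DecidableEq α] (blk : α → Finset α),
      Fintype.card α = n →
      (∀ t, t ∈ blk t) → (∀ t t', t' ∈ blk t → blk t' = blk t) →
      (∑' k : {k : α → ℤ // ∀ t, ∑ w ∈ blk t, k w = 0}, ∏ i, f (k.1 i))
      = ∏ b ∈ Finset.univ.image blk,
          ∑' k : {k : Fin b.card → ℤ // ∑ i, k i = 0}, ∏ i, f (k.1 i) := by
  intro n
  induction n using Nat.strong_induction_on with
  | _ n IH =>
    intro α _ _ blk hcard hmem hcoh
    classical
    rcases isEmpty_or_nonempty α with hα | hα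
    · rw [Finset.univ_eq_empty, image_empty, prod_empty]
      have hu : ∀ k k' : {k : α → ℤ // ∀ t, ∑ w ∈ blk t, k w = 0}, k = k' :=
        fun k k' => Subtype.ext (funext fun a => hα.elim a)
      have hd : {k : α → ℤ // ∀ t, ∑ w ∈ blk t, k w = 0} :=
        ⟨fun _ => 0, fun t => hα.elim t⟩
      rw [tsum_eq_single hd (fun b hb => absurd (hu b hd) hb)]
      simp
    · obtain ⟨t₀⟩ := hα
      set b := blk t₀ with hbdef
      have hb : b ∈ Finset.univ.image blk := mem_image.mpr ⟨t₀, mem_univ _, rfl⟩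
      have hdisj2 : ∀ x : α, blk x ≠ b → ∀ w ∈ blk x, w ∉ b := by
        intro x hx w hw hwb
        exact hx ((hcoh x w hw).symm.trans (hcoh t₀ w hwb))
      have hxb : ∀ x : α, x ∉ b → blk x ≠ b := fun x hx h => hx (h ▸ hmem x)
      let blk' : {x : α // x ∉ b} → Finset {x : α // x ∉ b} :=
        fun x => (blk x.1).subtype (fun w => w ∉ b)
      have hblk'sub : ∀ (x : {x : α // x ∉ b}) (w : α), w ∈ blk x.1 → w ∉ b :=
        fun x w hw => hdisj2 x.1 (hxb x.1 x.2) w hw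
      have hmem' : ∀ t, t ∈ blk' t := fun t => Finset.mem_subtype.mpr (hmem t.1)
      have hcoh' : ∀ t t', t' ∈ blk' t → blk' t' = blk' t := by
        intro t t' h
        have h1 : blk t'.1 = blk t.1 := hcoh t.1 t'.1 (Finset.mem_subtype.mp h)
        simp only [blk', h1]
      have hcardβ : Fintype.card {x : α // x ∉ b} < n := by
        rw [← hcard]
        exact Fintype.card_subtype_lt (x := t₀) (not_not_intro (hmem t₀))
      -- the splitting equivalence
      let Φ : {k : α → ℤ // ∀ t, ∑ w ∈ blk t, k w = 0} ≃
          {k : {x : α // x ∈ b} → ℤ // ∑ i, k i = 0} ×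
          {k : {x : α // x ∉ b} → ℤ // ∀ t, ∑ w ∈ blk' t, k w = 0} :=
      { toFun := fun k =>
          (⟨fun w => k.1 w.1, by
              rw [← Finset.sum_subtype b (fun x => Iff.rfl) k.1]
              exact k.2 t₀⟩,
           ⟨fun x => k.1 x.1, by
              intro t
              rw [show (∑ w ∈ blk' t, k.1 w.1) = ∑ w ∈ (blk t.1).filter (fun w => w ∉ b), k.1 w
                    from Finset.sum_subtype_eq_sum_filter _,
                 Finset.filter_true_of_mem (hblk'sub t)]
              exact k.2 t.1⟩)
        invFun := fun p =>
          ⟨fun x => if h : x ∈ b then p.1.1 ⟨x, h⟩ else p.2.1 ⟨x, h⟩, by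
            intro t
            by_cases ht : t ∈ b
            · rw [hcoh t₀ t ht, ← hbdef,
                Finset.sum_subtype b (fun x => Iff.rfl)
                  (fun x => if h : x ∈ b then p.1.1 ⟨x, h⟩ else p.2.1 ⟨x, h⟩)]
              rw [show (∑ w : {x : α // x ∈ b},
                    if h : w.1 ∈ b then p.1.1 ⟨w.1, h⟩ else p.2.1 ⟨w.1, h⟩)
                  = ∑ w : {x : α // x ∈ b}, p.1.1 w from
                Finset.sum_congr rfl (fun w _ => by rw [dif_pos w.2])]
              exact p.1.2
            · have hsub : ∀ w ∈ blk t, w ∉ b := hdisj2 t (hxb t ht)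
              rw [← Finset.filter_true_of_mem hsub,
                ← Finset.sum_subtype_eq_sum_filter
                  (fun x => if h : x ∈ b then p.1.1 ⟨x, h⟩ else p.2.1 ⟨x, h⟩)
                  (p := fun w => w ∉ b)]
              rw [show (∑ w ∈ (blk t).subtype (fun w => w ∉ b),
                    if h : w.1 ∈ b then p.1.1 ⟨w.1, h⟩ else p.2.1 ⟨w.1, h⟩)
                  = ∑ w ∈ blk' ⟨t, ht⟩, p.2.1 w from
                Finset.sum_congr rfl (fun w _ => by rw [dif_neg w.2])]
              exact p.2.2 ⟨t, ht⟩⟩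
        left_inv := fun k => Subtype.ext (funext fun x => by
          show (if h : x ∈ b then k.1 x else k.1 x) = k.1 x
          split <;> rfl)
        right_inv := fun p => by
          refine Prod.ext (Subtype.ext (funext fun w => ?_)) (Subtype.ext (funext fun w => ?_))
          · show (if h : w.1 ∈ b then p.1.1 ⟨w.1, h⟩ else p.2.1 ⟨w.1, h⟩) = p.1.1 w
            rw [dif_pos w.2]
          · show (if h : w.1 ∈ b then p.1.1 ⟨w.1, h⟩ else p.2.1 ⟨w.1, h⟩) = p.2.1 w
            rw [dif_neg w.2] }
      have key : (∑' k : {k : α → ℤ // ∀ t, ∑ w ∈ blk t, k w = 0}, ∏ i, f (k.1 i))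
          = (∑' k : {k : {x : α // x ∈ b} → ℤ // ∑ i, k i = 0}, ∏ i, f (k.1 i)) *
            (∑' k : {k : {x : α // x ∉ b} → ℤ // ∀ t, ∑ w ∈ blk' t, k w = 0},
              ∏ i, f (k.1 i)) := by
        rw [tsum_mul_tsum_of_summable_norm (summable_norm_prod_subtype hf _ _)
          (summable_norm_prod_subtype hf _ _)]
        rw [← Equiv.tsum_eq Φ.symm (fun k => ∏ i, f (k.1 i))]
        refine tsum_congr fun p => ?_
        rw [← Fintype.prod_subtype_mul_prod_subtype (fun x => x ∈ b) (fun i => f ((Φ.symm p).1 i))]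
        congr 1
        · exact Finset.prod_congr (Finset.ext fun x => by simp) fun w _ => by
            show f (if h : w.1 ∈ b then p.1.1 ⟨w.1, h⟩ else p.2.1 ⟨w.1, h⟩) = f (p.1.1 w)
            rw [dif_pos w.2]
        · exact Finset.prod_congr (Finset.ext fun x => by simp) fun w _ => by
            show f (if h : w.1 ∈ b then p.1.1 ⟨w.1, h⟩ else p.2.1 ⟨w.1, h⟩) = f (p.2.1 w)
            rw [dif_neg w.2]
      rw [key]
      -- first factor
      rw [tsum_zero_sum_equiv f _ b.card (Fintype.equivFinOfCardEq (Fintype.card_coe b))]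
      -- second factor by induction
      rw [IH (Fintype.card {x : α // x ∉ b}) hcardβ {x : α // x ∉ b} blk' rfl hmem' hcoh']
      -- now the product identity
      rw [← Finset.insert_erase hb, prod_insert (notMem_erase _ _)]
      congr 1
      refine Finset.prod_nbij'
        (fun c : Finset {x : α // x ∉ b} => c.map (Function.Embedding.subtype fun w => w ∉ b))
        (fun s : Finset α => s.subtype (fun w => w ∉ b)) ?_ ?_ ?_ ?_ ?_
      · -- maps-to: image blk' → erase
        intro c hc
        obtain ⟨x, -, rfl⟩ := mem_image.mp hc
        have h1 : (blk' x).map (Function.Embedding.subtype fun w => w ∉ b) = blk x.1 := by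
          rw [show (blk' x).map (Function.Embedding.subtype fun w => w ∉ b)
              = (blk x.1).filter (fun w => w ∉ b) from Finset.subtype_map _,
            Finset.filter_true_of_mem (hblk'sub x)]
        rw [h1]
        exact Finset.mem_erase.mpr ⟨hxb x.1 x.2, mem_image.mpr ⟨x.1, mem_univ _, rfl⟩⟩
      · -- maps-to: erase → image blk'
        intro s hs
        obtain ⟨hne, hsim⟩ := Finset.mem_erase.mp hs
        obtain ⟨x, -, rfl⟩ := mem_image.mp hsim
        have hx : x ∉ b := fun h => hne ((hcoh t₀ x h).trans rfl)
        exact mem_image.mpr ⟨⟨x, hx⟩, mem_univ _, rfl⟩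
      · -- left inverse on image blk'
        intro c hc
        obtain ⟨x, -, rfl⟩ := mem_image.mp hc
        have h1 : (blk' x).map (Function.Embedding.subtype fun w => w ∉ b) = blk x.1 := by
          rw [show (blk' x).map (Function.Embedding.subtype fun w => w ∉ b)
              = (blk x.1).filter (fun w => w ∉ b) from Finset.subtype_map _,
            Finset.filter_true_of_mem (hblk'sub x)]
        rw [h1]
      · -- right inverse on erase
        intro s hs
        obtain ⟨hne, hsim⟩ := Finset.mem_erase.mp hs
        obtain ⟨x, -, rfl⟩ := mem_image.mp hsim
        rw [show ((blk x).subtype (fun w => w ∉ b)).map (Function.Embedding.subtype fun w => w ∉ b)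
            = (blk x).filter (fun w => w ∉ b) from Finset.subtype_map _,
          Finset.filter_true_of_mem (hdisj2 x hne)]
      · -- value congruence
        intro c hc
        obtain ⟨x, -, rfl⟩ := mem_image.mp hc
        have h1 : ((blk' x).map (Function.Embedding.subtype fun w => w ∉ b)).card = (blk' x).card :=
          Finset.card_map _
        rw [h1]

set_option maxHeartbeats 1000000 in
open scoped Classical in
theorem statement18 (R : ℤ → ℤ → ℝ)
    (hsum : Summable fun k : ℤ => |R k 0|)
    (hprod : ∀ u v : ℤ, R u v = R u 0 * R 0 v)
    (hsymm : ∀ u : ℤ, R u 0 = R 0 u)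
    (m : ℕ) (hm : 1 ≤ m)
    (K : Equiv.Perm (Fin (2*m)) → (Fin (2*m) → Fin (2*m) → Prop))
    (hK : ∀ π, IsNCPairing m π → IsKreweras m π (K π))
    (mom : ℕ → ℝ)
    (hmom : ∀ j : ℕ, mom j =
      ∑' k : {k : Fin j → ℤ // ∑ i, k i = 0}, ∏ i, R (k.1 i) 0) :
    ∑ π ∈ Finset.univ.filter (fun π : Equiv.Perm (Fin (2*m)) => IsNCPairing m π),
      ∏ b ∈ Finset.univ.image (fun t => Finset.univ.filter (fun w => K π w t)),
        mom b.card
    = ∑ π ∈ Finset.univ.filter (fun π : Equiv.Perm (Fin (2*m)) => IsNCPairing m π),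
        ∑' k : {k : Fin (2*m) → ℤ //
            ∀ t, ∑ w ∈ Finset.univ.filter (fun w => K π w t), k w = 0},
          ∏ j ∈ Finset.univ.filter (fun j => j < π j),
            R (k.1 j) 0 * R (k.1 (π j)) 0 := by
  refine Finset.sum_congr rfl fun π hπmem => ?_
  rw [Finset.mem_filter] at hπmem
  obtain ⟨-, hπ⟩ := hπmem
  obtain ⟨hEq, -, -⟩ := hK π hπ
  obtain ⟨hinv, hfpf, -⟩ := hπ
  set blk : Fin (2*m) → Finset (Fin (2*m)) :=
    fun t => Finset.univ.filter (fun w => K π w t) with hblk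
  have hmem : ∀ t, t ∈ blk t :=
    fun t => Finset.mem_filter.mpr ⟨Finset.mem_univ t, hEq.refl t⟩
  have hcoh : ∀ t t', t' ∈ blk t → blk t' = blk t := by
    intro t t' h
    have h1 : K π t' t := (Finset.mem_filter.mp h).2
    ext w
    simp only [hblk, Finset.mem_filter, Finset.mem_univ, true_and]
    exact ⟨fun hw => hEq.trans hw h1, fun hw => hEq.trans hw (hEq.symm h1)⟩
  calc ∏ b ∈ Finset.univ.image blk, mom b.card
      = ∏ b ∈ Finset.univ.image blk,
          ∑' k : {k : Fin b.card → ℤ // ∑ i, k i = 0}, ∏ i, R (k.1 i) 0 :=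
        Finset.prod_congr rfl fun b _ => hmom b.card
    _ = ∑' k : {k : Fin (2*m) → ℤ // ∀ t, ∑ w ∈ blk t, k w = 0},
          ∏ i, R (k.1 i) 0 :=
        (factor (fun u => R u 0) hsum (Fintype.card (Fin (2*m))) (Fin (2*m)) blk rfl
          hmem hcoh).symm
    _ = ∑' k : {k : Fin (2*m) → ℤ // ∀ t, ∑ w ∈ blk t, k w = 0},
          ∏ j ∈ Finset.univ.filter (fun j => j < π j),
            R (k.1 j) 0 * R (k.1 (π j)) 0 :=
        tsum_congr fun k =>
          (pair_prod π hinv hfpf (fun i => R (k.1 i) 0)).symm
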